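/- arXiv:1404.6820 — 2 statements merged into one kernel-verified Lean document; each statement's English description precedes it below -/
import Mathlib

section
/- In the Friedrichs model, let λ ∈ ℂ with Im λ ≠ 0 and suppose D(λ) := 1 + ∫_ℝ ψ(x)·conj(φ(x))/(x − λ) dx ≠ 0, and set Φ(λ) := ∫_ℝ conj(φ(t))/(t − λ) dt. Then an element f ∈ D(A*) satisfies Ã* f = λ f if and only if there is c ∈ ℂ (necessarily c = c_f) such that f(x) = c·[1/(x−λ) − (Φ(λ)/D(λ))·ψ(x)/(x−λ)] for almost every x ∈ ℝ. In particular, ker(Ã* − λ) is the one-dimensional subspace spanned by the function x ↦ 1/(x−λ) − (Φ(λ)/D(λ))·ψ(x)/(x−λ). -/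
open MeasureTheory Filter Topology
open scoped InnerProductSpace

noncomputable section

lemma int_mul' {f g : ℝ → ℂ} (hf : MemLp f 2 volume) (hg : MemLp g 2 volume) :
    Integrable (fun x => f x * g x) volume := by
  rw [← memLp_one_iff_integrable]
  have := hg.smul (p := 2) (q := 2) (r := 1) hf
  exact this

lemma conj_mem' {f : ℝ → ℂ} (hf : MemLp f 2 volume) :
    MemLp (fun x => (starRingEnd ℂ) (f x)) 2 volume := by
  refine MemLp.of_le hf ?_ (Filter.Eventually.of_forall fun x => by simp)
  exact (Complex.continuous_conj.comp_aestronglyMeasurable hf.1 : _)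

lemma sub_ne' (lam : ℂ) (hlam : lam.im ≠ 0) (x : ℝ) : (x : ℂ) - lam ≠ 0 := by
  intro h
  apply hlam
  have := congrArg Complex.im h
  simpa using this.symm

lemma res_mem' (lam : ℂ) (hlam : lam.im ≠ 0) :
    MemLp (fun x : ℝ => ((x : ℂ) - lam)⁻¹) 2 volume := by
  have hc : Continuous fun x : ℝ => ((x : ℂ) - lam)⁻¹ :=
    (Complex.continuous_ofReal.sub continuous_const).inv₀ (sub_ne' lam hlam)
  rw [memLp_two_iff_integrable_sq_norm hc.aestronglyMeasurable]
  have hbase : Integrable (fun x : ℝ => (1 + (x - lam.re) ^ 2)⁻¹) volume :=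
    integrable_inv_one_add_sq.comp_sub_right lam.re
  refine (hbase.const_mul (max 1 (lam.im ^ 2)⁻¹)).mono' ?_
    (Filter.Eventually.of_forall fun x => ?_)
  · exact (hc.norm.pow 2).aestronglyMeasurable
  · have h1 : ‖(((x : ℂ) - lam)⁻¹)‖ ^ 2 = ((x - lam.re) ^ 2 + lam.im ^ 2)⁻¹ := by
      rw [norm_inv, inv_pow, Complex.sq_norm, Complex.normSq_apply]
      norm_num
      ring_nf
    rw [Real.norm_eq_abs, abs_of_nonneg (by positivity), h1]
    rw [← div_eq_mul_inv, le_div_iff₀ (by positivity), inv_mul_le_iff₀ (by positivity)]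
    have h2 : (lam.im ^ 2)⁻¹ ≤ max 1 (lam.im ^ 2)⁻¹ := le_max_right _ _
    have h3 : (1:ℝ) ≤ max 1 (lam.im ^ 2)⁻¹ := le_max_left _ _
    have hb : (0:ℝ) < lam.im ^ 2 := by positivity
    have h4 : (1:ℝ) ≤ max 1 (lam.im ^ 2)⁻¹ * lam.im ^ 2 := by
      calc (1:ℝ) = (lam.im ^ 2)⁻¹ * lam.im ^ 2 := by field_simp
      _ ≤ _ := mul_le_mul_of_nonneg_right h2 hb.le
    nlinarith [sq_nonneg (x - lam.re)]

lemma psi_res_mem' (lam : ℂ) (hlam : lam.im ≠ 0) {ψ : ℝ → ℂ} (hψ : MemLp ψ 2 volume) :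
    MemLp (fun x : ℝ => ψ x * ((x : ℂ) - lam)⁻¹) 2 volume := by
  have hc : Continuous fun x : ℝ => ((x : ℂ) - lam)⁻¹ :=
    (Complex.continuous_ofReal.sub continuous_const).inv₀ (sub_ne' lam hlam)
  refine MemLp.of_le (hψ.const_mul ((|lam.im|⁻¹ : ℝ) : ℂ)) (hψ.1.mul hc.aestronglyMeasurable)
    (Filter.Eventually.of_forall fun x => ?_)
  have him : |lam.im| ≤ ‖((x : ℂ) - lam)‖ := by
    have := Complex.abs_im_le_norm ((x : ℂ) - lam)
    simpa using this
  have h0 : (0:ℝ) < |lam.im| := abs_pos.mpr hlam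
  rw [norm_mul, norm_mul, norm_inv]
  have : ‖((x : ℂ) - lam)‖⁻¹ ≤ |lam.im|⁻¹ := by
    exact inv_anti₀ h0 him
  calc ‖ψ x‖ * ‖((x:ℂ) - lam)‖⁻¹ ≤ ‖ψ x‖ * |lam.im|⁻¹ :=
        mul_le_mul_of_nonneg_left this (norm_nonneg _)
    _ = ‖((|lam.im|⁻¹ : ℝ) : ℂ)‖ * ‖ψ x‖ := by
        rw [mul_comm]; congr 1; simp

/-- The space `L²(ℝ)` (complex valued). -/
abbrev L2 := Lp ℂ 2 (volume : Measure ℝ)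

/-- Membership in the domain of the minimal Friedrichs-model operator `A`:
`x f(x) ∈ L²` and `lim_{R→∞} ∫_{-R}^R f = 0`. -/
abbrev inDomA (f : L2) : Prop :=
  MemLp (fun x : ℝ => (x : ℂ) * f x) 2 volume ∧
    Tendsto (fun R : ℝ => ∫ x in Set.Ioc (-R) R, f x) atTop (nhds 0)

/-- Membership in the domain of the maximal operator(s): there is a constant `c`
(the trace `Γ₂ f = c_f`) with `x f(x) − c ∈ L²`. -/
abbrev inDomAstar (f : L2) (c : ℂ) : Prop :=
  MemLp (fun x : ℝ => (x : ℂ) * f x - c) 2 volume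

/-- The minimal operator `A`: `(A f)(x) = x f(x) + ⟨f, φ⟩ ψ(x)`
(paper inner product `⟨f, φ⟩ = ⟪φ, f⟫` in Mathlib's convention). -/
def Aop (φ ψ f : L2) (hf : inDomA f) : L2 :=
  MemLp.toLp (fun x : ℝ => (x : ℂ) * f x) hf.1 + ⟪φ, f⟫_ℂ • ψ

/-- The adjoint expression `A*`: `(A* f)(x) = x f(x) − c_f + ⟨f, ψ⟩ φ(x)`. -/
def AstarOp (φ ψ f : L2) (c : ℂ) (h : inDomAstar f c) : L2 :=
  MemLp.toLp (fun x : ℝ => (x : ℂ) * f x - c) h + ⟪ψ, f⟫_ℂ • φ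

/-- The expression `Ã*`: `(Ã* f)(x) = x f(x) − c_f + ⟨f, φ⟩ ψ(x)`. -/
def AtildeStarOp (φ ψ f : L2) (c : ℂ) (h : inDomAstar f c) : L2 :=
  MemLp.toLp (fun x : ℝ => (x : ℂ) * f x - c) h + ⟪φ, f⟫_ℂ • ψ

/-- The operator `Ã`: `(Ã f)(x) = x f(x) + ⟨f, ψ⟩ φ(x)` on `D(A)`. -/
def AtildeOp (φ ψ f : L2) (hf : inDomA f) : L2 :=
  MemLp.toLp (fun x : ℝ => (x : ℂ) * f x) hf.1 + ⟪ψ, f⟫_ℂ • φ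

/-- For nonreal `λ` with `D(λ) ≠ 0`, an element `f ∈ D(A*)` (with trace
constant `c`) satisfies `Ã* f = λ f` iff
`f(x) = c·[1/(x−λ) − (Φ(λ)/D(λ))·ψ(x)/(x−λ)]` a.e.; in particular `ker(Ã* − λ)` is the
one-dimensional subspace spanned by that function. -/
theorem statement_18 (φ ψ : L2) (lam : ℂ) (hlam : lam.im ≠ 0)
    (Dl Phi : ℂ)
    (hD : Dl = 1 + ∫ x : ℝ, ψ x * (starRingEnd ℂ) (φ x) / ((x : ℂ) - lam))
    (hPhi : Phi = ∫ t : ℝ, (starRingEnd ℂ) (φ t) / ((t : ℂ) - lam))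
    (hDne : Dl ≠ 0) :
    (∀ (f : L2) (c : ℂ) (h : inDomAstar f c),
      (AtildeStarOp φ ψ f c h = lam • f ↔
        ⇑f =ᵐ[volume] fun x : ℝ =>
          c * (((x : ℂ) - lam)⁻¹ - (Phi / Dl) * ψ x / ((x : ℂ) - lam))))
    ∧ ∃ f₀ : L2,
        (⇑f₀ =ᵐ[volume] fun x : ℝ =>
          ((x : ℂ) - lam)⁻¹ - (Phi / Dl) * ψ x / ((x : ℂ) - lam))
        ∧ f₀ ≠ 0
        ∧ {f : L2 | ∃ (c : ℂ) (h : inDomAstar f c), AtildeStarOp φ ψ f c h = lam • f}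
            = {f : L2 | ∃ c : ℂ, f = c • f₀} := by
  have hsub : ∀ x : ℝ, (x : ℂ) - lam ≠ 0 := sub_ne' lam hlam
  set a : ℂ := Phi / Dl with ha_def
  set r : ℝ → ℂ := fun x : ℝ => ((x : ℂ) - lam)⁻¹ with hr_def
  set g : ℝ → ℂ := fun x : ℝ => r x - a * ψ x / ((x : ℂ) - lam) with hg_def
  have hr : MemLp r 2 volume := res_mem' lam hlam
  have hψr : MemLp (fun x => ψ x * r x) 2 volume := psi_res_mem' lam hlam (Lp.memLp ψ)
  have hg_eq : (fun x => r x - a * (ψ x * r x)) = g := funext fun x => by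
    simp only [hg_def, hr_def, div_eq_mul_inv]; ring
  have hg : MemLp g 2 volume := hg_eq ▸ (hr.sub (hψr.const_mul a))
  have hφc : MemLp (fun x => (starRingEnd ℂ) (φ x)) 2 volume := conj_mem' (Lp.memLp φ)
  have hI1 : ∫ x : ℝ, (starRingEnd ℂ) (φ x) * r x = Phi := by
    rw [hPhi]
    exact integral_congr_ae (Filter.Eventually.of_forall fun x => by
      simp [hr_def, div_eq_mul_inv])
  have hI2 : ∫ x : ℝ, (starRingEnd ℂ) (φ x) * (ψ x * r x) = Dl - 1 := by
    have : ∫ x : ℝ, (starRingEnd ℂ) (φ x) * (ψ x * r x)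
        = ∫ x : ℝ, ψ x * (starRingEnd ℂ) (φ x) / ((x : ℂ) - lam) :=
      integral_congr_ae (Filter.Eventually.of_forall fun x => by
        simp [hr_def, div_eq_mul_inv]; ring)
    rw [this, hD]; ring
  have hint1 : Integrable (fun x => (starRingEnd ℂ) (φ x) * r x) volume := int_mul' hφc hr
  have hint2 : Integrable (fun x => (starRingEnd ℂ) (φ x) * (ψ x * r x)) volume :=
    int_mul' hφc hψr
  have main : ∀ (f : L2) (c : ℂ) (h : inDomAstar f c),
      (AtildeStarOp φ ψ f c h = lam • f ↔ ⇑f =ᵐ[volume] fun x => c * g x) := by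
    intro f c h
    set k : ℂ := ⟪φ, f⟫_ℂ with hk_def
    have hkint : k = ∫ x : ℝ, (starRingEnd ℂ) (φ x) * f x := by
      rw [hk_def, L2.inner_def]
      exact integral_congr_ae (Filter.Eventually.of_forall fun x => by
        simp [RCLike.inner_apply, mul_comm])
    have hfint : Integrable (fun x : ℝ => (starRingEnd ℂ) (φ x) * f x) volume :=
      int_mul' hφc (Lp.memLp f)
    have e1 : ⇑(AtildeStarOp φ ψ f c h)
        =ᵐ[volume] fun x : ℝ => ((x : ℂ) * f x - c) + k * ψ x := by
      rw [AtildeStarOp]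
      filter_upwards [Lp.coeFn_add (MemLp.toLp _ h) (⟪φ, f⟫_ℂ • ψ), h.coeFn_toLp,
        Lp.coeFn_smul (⟪φ, f⟫_ℂ) ψ] with x h2 h3 h4
      simp only [h2, Pi.add_apply, h3, h4, Pi.smul_apply, smul_eq_mul, hk_def]
    have e2 : ⇑(lam • f) =ᵐ[volume] fun x : ℝ => lam * f x := by
      filter_upwards [Lp.coeFn_smul lam f] with x h1
      simp [h1]
    have hcoe : AtildeStarOp φ ψ f c h = lam • f ↔
        (∀ᵐ x : ℝ ∂volume, ((x : ℂ) * f x - c) + k * ψ x = lam * f x) := by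
      rw [Lp.ext_iff]
      constructor
      · intro hh
        exact (e1.symm.trans (hh.trans e2) : _)
      · intro hh
        exact Filter.EventuallyEq.trans e1 (Filter.EventuallyEq.trans hh e2.symm)
    constructor
    · intro hh
      have hae := hcoe.mp hh
      have hfae : ⇑f =ᵐ[volume] fun x => (c - k * ψ x) * r x := by
        filter_upwards [hae] with x hx
        have hx0 := hsub x
        show (f : ℝ → ℂ) x = (c - k * ψ x) * (((x : ℂ) - lam))⁻¹
        rw [eq_mul_inv_iff_mul_eq₀ hx0]
        linear_combination hx
      have hkD : k * Dl = c * Phi := by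
        have h1 : k = ∫ x : ℝ, (starRingEnd ℂ) (φ x) * ((c - k * ψ x) * r x) :=
          hkint.trans (integral_congr_ae (hfae.mono fun x hx => by simp only [hx]))
        have h2 : (fun x : ℝ => (starRingEnd ℂ) (φ x) * ((c - k * ψ x) * r x))
            = fun x : ℝ => c * ((starRingEnd ℂ) (φ x) * r x)
              - k * ((starRingEnd ℂ) (φ x) * (ψ x * r x)) := funext fun x => by ring
        rw [h2, integral_sub (hint1.const_mul c) (hint2.const_mul k),
          integral_const_mul, integral_const_mul, hI1, hI2] at h1
        linear_combination h1
      have hka : k = c * a := by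
        rw [ha_def]
        field_simp
        linear_combination hkD
      refine hfae.trans (Filter.Eventually.of_forall fun x => ?_)
      rw [hka]
      simp only [hg_def, hr_def, div_eq_mul_inv]
      ring
    · intro hf
      have hka : k = c * a := by
        rw [hkint]
        have h1 : ∫ x : ℝ, (starRingEnd ℂ) (φ x) * f x
            = ∫ x : ℝ, (starRingEnd ℂ) (φ x) * (c * g x) :=
          integral_congr_ae (hf.mono fun x hx => by simp only [hx])
        have h2 : (fun x : ℝ => (starRingEnd ℂ) (φ x) * (c * g x))
            = fun x : ℝ => c * ((starRingEnd ℂ) (φ x) * r x)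
              - (c * a) * ((starRingEnd ℂ) (φ x) * (ψ x * r x)) := funext fun x => by
          simp only [hg_def, hr_def, div_eq_mul_inv]; ring
        rw [h1, h2, integral_sub (hint1.const_mul c) (hint2.const_mul (c * a)),
          integral_const_mul, integral_const_mul, hI1, hI2, ha_def]
        field_simp
        ring
      refine hcoe.mpr ?_
      filter_upwards [hf] with x hx
      rw [hx, hka]
      have hx0 := hsub x
      simp only [hg_def, hr_def]
      field_simp
      ring
  refine ⟨main, hg.toLp g, hg.coeFn_toLp, ?_, ?_⟩
  · -- f₀ ≠ 0
    intro h0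
    have hgz : g =ᵐ[volume] (0 : ℝ → ℂ) := by
      have := hg.coeFn_toLp (f := g)
      rw [h0] at this
      exact this.symm.trans (Lp.coeFn_zero _ _ _)
    by_cases haz : a = 0
    · have : ∀ᵐ x : ℝ ∂volume, False := by
        filter_upwards [hgz] with x hx
        simp only [hg_def, hr_def, haz, Pi.zero_apply, zero_mul, zero_div, sub_zero] at hx
        exact inv_ne_zero (hsub x) hx
      rw [ae_iff] at this
      simp at this
    · have hψc : ⇑ψ =ᵐ[volume] fun _ : ℝ => a⁻¹ := by
        filter_upwards [hgz] with x hx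
        simp only [hg_def, hr_def, Pi.zero_apply] at hx
        have hx0 := hsub x
        field_simp [hx0] at hx
        field_simp [haz]
        linear_combination -hx
      have : MemLp (fun _ : ℝ => a⁻¹) 2 volume := (Lp.memLp ψ).ae_eq hψc
      rw [memLp_const_iff (by norm_num) (by norm_num)] at this
      rcases this with h | h
      · exact haz (by simpa using h)
      · rw [Real.volume_univ] at h
        exact absurd h (by simp)
  · -- set equality
    ext f
    simp only [Set.mem_setOf_eq]
    constructor
    · rintro ⟨c, h, heq⟩
      refine ⟨c, ?_⟩
      rw [Lp.ext_iff]
      have h1 := (main f c h).mp heq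
      have h2 : ⇑(c • hg.toLp g) =ᵐ[volume] fun x => c * g x := by
        filter_upwards [Lp.coeFn_smul c (hg.toLp g), hg.coeFn_toLp] with x hx hy
        simp [hx, hy]
      exact h1.trans h2.symm
    · rintro ⟨c, rfl⟩
      have hfae : ⇑(c • hg.toLp g) =ᵐ[volume] fun x => c * g x := by
        filter_upwards [Lp.coeFn_smul c (hg.toLp g), hg.coeFn_toLp] with x hx hy
        simp [hx, hy]
      have hmem : MemLp (fun x : ℝ => c * (lam * g x - a * ψ x)) 2 volume :=
        (((hg.const_mul lam).sub ((Lp.memLp ψ).const_mul a)).const_mul c)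
      have h : inDomAstar (c • hg.toLp g) c := by
        refine hmem.ae_eq ?_
        filter_upwards [hfae] with x hx
        rw [hx]
        have hx0 := hsub x
        simp only [hg_def, hr_def]
        field_simp
        ring
      exact ⟨c, h, (main _ c h).mpr hfae⟩
end
end

section
/- In the Friedrichs model, let λ ∈ ℂ with Im λ ≠ 0 and D(λ) := 1 + ∫_ℝ ψ(x)·conj(φ(x))/(x − λ) dx ≠ 0, and set Φ(λ) := ∫_ℝ conj(φ(t))/(t − λ) dt and Ψ(λ) := ∫_ℝ ψ(t)/(t − λ) dt. Let f(x) = 1/(x−λ) − (Φ(λ)/D(λ))·ψ(x)/(x−λ), the generator of ker(Ã* − λ) normalized so that Γ₂ f = 1. Then the limit Γ₁ f = lim_{R→∞} ∫_{−R}^{R} f(x) dx exists and equals sign(Im λ)·πi − Φ(λ)Ψ(λ)/D(λ). Consequently, for B ∈ ℂ with sign(Im λ)·πi − Φ(λ)Ψ(λ)/D(λ) − B ≠ 0, every u ∈ D(A*) with Ã* u = λ u satisfies Γ₂ u = M_B(λ)·(Γ₁ u − B·Γ₂ u), where M_B(λ) = [sign(Im λ)·πi − Φ(λ)Ψ(λ)/D(λ)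 − B]⁻¹ is the Titchmarsh–Weyl coefficient of the Friedrichs model. -/
open MeasureTheory Filter Topology
open scoped InnerProductSpace

noncomputable section

namespace St19


variable {lam : ℂ}

lemma sub_ne_zero_of_im (hlam : lam.im ≠ 0) (x : ℝ) : (x : ℂ) - lam ≠ 0 := by
  intro h
  apply hlam
  have := congrArg Complex.im h
  simpa using this

lemma cont_inv (hlam : lam.im ≠ 0) : Continuous fun x : ℝ => ((x : ℂ) - lam)⁻¹ :=
  (Complex.continuous_ofReal.sub continuous_const).inv₀ (sub_ne_zero_of_im hlam)

lemma memLp_inv (hlam : lam.im ≠ 0) :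
    MemLp (fun x : ℝ => ((x : ℂ) - lam)⁻¹) 2 (volume : Measure ℝ) := by
  rw [memLp_two_iff_integrable_sq_norm (cont_inv hlam).aestronglyMeasurable]
  have h1 : Integrable (fun y : ℝ => (1 + y ^ 2)⁻¹) := integrable_inv_one_add_sq
  have h2 : Integrable (fun y : ℝ => (1 + (y * lam.im⁻¹) ^ 2)⁻¹) :=
    (integrable_comp_mul_right_iff _ (inv_ne_zero hlam)).2 h1
  have h3 : Integrable (fun y : ℝ => (lam.im ^ 2)⁻¹ * (1 + (y * lam.im⁻¹) ^ 2)⁻¹) :=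
    h2.const_mul _
  have h4 := h3.comp_sub_right lam.re
  refine h4.congr (Eventually.of_forall fun x => ?_)
  show (lam.im ^ 2)⁻¹ * (1 + ((x - lam.re) * lam.im⁻¹) ^ 2)⁻¹ = ‖((x : ℂ) - lam)⁻¹‖ ^ 2
  have hre : ((x : ℂ) - lam).re = x - lam.re := by simp
  have him : ((x : ℂ) - lam).im = -lam.im := by simp
  rw [norm_inv, inv_pow, Complex.sq_norm, Complex.normSq_apply, hre, him,
    ← mul_inv]
  congr 1
  field_simp
  ring

lemma integrable_L2_mul {f g : ℝ → ℂ} (hf : MemLp f 2 (volume : Measure ℝ))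
    (hg : MemLp g 2 (volume : Measure ℝ)) :
    Integrable (fun x => f x * g x) := by
  rw [← memLp_one_iff_integrable]
  have h := MemLp.smul (p := 2) (q := 2) (r := 1) hg hf (hpqr := ⟨by norm_num [ENNReal.inv_two_add_inv_two]⟩)
  exact h

lemma trunc_tendsto {f : ℝ → ℂ} (hf : Integrable f) :
    Tendsto (fun R : ℝ => ∫ x in Set.Ioc (-R) R, f x) atTop (𝓝 (∫ x, f x)) := by
  have h := intervalIntegral_tendsto_integral hf tendsto_neg_atTop_atBot tendsto_id
  apply h.congr'
  filter_upwards [eventually_ge_atTop (0 : ℝ)] with R hR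
  simp only [id_eq]
  rw [intervalIntegral.integral_of_le (by linarith : -R ≤ R)]

lemma integral_inv_Ioc (hlam : lam.im ≠ 0) {R : ℝ} (hR : 0 ≤ R) :
    ∫ x in Set.Ioc (-R) R, ((x : ℂ) - lam)⁻¹
      = Complex.log ((R : ℂ) - lam) - Complex.log (-(R : ℂ) - lam) := by
  rw [← intervalIntegral.integral_of_le (by linarith : -R ≤ R)]
  have hder : ∀ x ∈ Set.uIcc (-R) R,
      HasDerivAt (fun y : ℝ => Complex.log ((y : ℂ) - lam)) (((x : ℂ) - lam)⁻¹) x := by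
    intro x _
    have hmem : ((x : ℂ) - lam) ∈ Complex.slitPlane := by
      rw [Complex.mem_slitPlane_iff]
      right
      simpa using hlam
    have h1 := Complex.hasDerivAt_log hmem
    have h2 : HasDerivAt (fun z : ℂ => z - lam) 1 (x : ℂ) := (hasDerivAt_id _).sub_const lam
    have h3 : HasDerivAt (fun z : ℂ => Complex.log (z - lam)) (((x : ℂ) - lam)⁻¹) (x : ℂ) := by
      have h4 := h1.comp (x : ℂ) h2
      rw [mul_one] at h4
      exact h4
    exact h3.comp_ofReal
  rw [intervalIntegral.integral_eq_sub_of_hasDerivAt hder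
    ((cont_inv hlam).intervalIntegrable _ _)]
  push_cast
  ring_nf


end St19

namespace St19


variable {lam : ℂ}

lemma sub_ne_zero_of_im' (hlam : lam.im ≠ 0) (x : ℝ) : (x : ℂ) - lam ≠ 0 := by
  intro h
  apply hlam
  have := congrArg Complex.im h
  simpa using this

lemma tendsto_log_diff (hlam : lam.im ≠ 0) :
    Tendsto (fun R : ℝ => Complex.log ((R : ℂ) - lam) - Complex.log (-(R : ℂ) - lam)) atTop
      (𝓝 ((if 0 < lam.im then (1 : ℂ) else -1) * Real.pi * Complex.I)) := by
  classical
  -- the rescaled factors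
  have hinv : Tendsto (fun R : ℝ => lam * ((R : ℂ))⁻¹) atTop (𝓝 0) := by
    have h0 : Tendsto (fun R : ℝ => (R : ℝ)⁻¹) atTop (𝓝 0) := tendsto_inv_atTop_zero
    have h1 : Tendsto (fun R : ℝ => ((R⁻¹ : ℝ) : ℂ)) atTop (𝓝 ((0 : ℝ) : ℂ)) :=
      (Complex.continuous_ofReal.tendsto _).comp h0
    have h2 := h1.const_mul lam
    simpa using h2
  set w : ℝ → ℂ := fun R => 1 - lam * ((R : ℂ))⁻¹ with hw_def
  set w' : ℝ → ℂ := fun R => -1 - lam * ((R : ℂ))⁻¹ with hw'_def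
  have hw : Tendsto w atTop (𝓝 1) := by
    have := (tendsto_const_nhds : Tendsto (fun _ : ℝ => (1 : ℂ)) atTop (𝓝 1)).sub hinv
    simpa using this
  have hw' : Tendsto w' atTop (𝓝 (-1)) := by
    have := (tendsto_const_nhds : Tendsto (fun _ : ℝ => (-1 : ℂ)) atTop (𝓝 (-1))).sub hinv
    simpa using this
  have hfact : ∀ᶠ R : ℝ in atTop,
      ((R : ℂ) - lam) = (R : ℂ) * w R ∧ (-(R : ℂ) - lam) = (R : ℂ) * w' R := by
    filter_upwards [eventually_gt_atTop (0 : ℝ)] with R hR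
    have hRne : (R : ℂ) ≠ 0 := by exact_mod_cast hR.ne'
    constructor
    · show (R : ℂ) - lam = (R : ℂ) * (1 - lam * ((R : ℂ))⁻¹)
      rw [mul_sub, mul_one, mul_left_comm, mul_inv_cancel₀ hRne, mul_one]
    · show -(R : ℂ) - lam = (R : ℂ) * (-1 - lam * ((R : ℂ))⁻¹)
      rw [mul_sub, mul_neg_one, mul_left_comm, mul_inv_cancel₀ hRne, mul_one]
      try ring
  -- absolute values
  have habsw : Tendsto (fun R => ‖w R‖) atTop (𝓝 1) := by
    have := (continuous_norm.tendsto (1 : ℂ)).comp hw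
    simpa [Function.comp_def] using this
  have habsw' : Tendsto (fun R => ‖w' R‖) atTop (𝓝 1) := by
    have := (continuous_norm.tendsto (-1 : ℂ)).comp hw'
    simpa [Function.comp_def] using this
  have hwne : ∀ᶠ R : ℝ in atTop, w R ≠ 0 ∧ w' R ≠ 0 := by
    filter_upwards [hfact, eventually_gt_atTop (0 : ℝ)] with R ⟨e1, e2⟩ hR
    constructor
    · intro h0
      exact sub_ne_zero_of_im' hlam R (by rw [e1, h0, mul_zero])
    · intro h0
      have : -(R : ℂ) - lam = 0 := by rw [e2, h0, mul_zero]
      have him := congrArg Complex.im this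
      simp at him
      exact hlam him
  -- log abs part tends to 0
  have hL : Tendsto (fun R : ℝ =>
      Real.log (‖(R : ℂ) - lam‖) - Real.log (‖-(R : ℂ) - lam‖))
      atTop (𝓝 0) := by
    have hcont : ContinuousAt Real.log 1 := Real.continuousAt_log one_ne_zero
    have h1 : Tendsto (fun R => Real.log (‖w R‖)) atTop (𝓝 0) := by
      have := hcont.tendsto.comp habsw
      simpa [Function.comp_def] using this
    have h1' : Tendsto (fun R => Real.log (‖w' R‖)) atTop (𝓝 0) := by
      have := hcont.tendsto.comp habsw'
      simpa [Function.comp_def] using this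
    have h2 := h1.sub h1'
    rw [sub_zero] at h2
    apply h2.congr'
    filter_upwards [hfact, hwne, eventually_gt_atTop (0 : ℝ)] with R ⟨e1, e2⟩ ⟨hn, hn'⟩ hR
    rw [e1, e2, norm_mul, norm_mul, Complex.norm_real, Real.norm_eq_abs, abs_of_pos hR,
      Real.log_mul hR.ne' (norm_ne_zero_iff.mpr hn),
      Real.log_mul hR.ne' (norm_ne_zero_iff.mpr hn')]
    ring
  -- argument ratio limits
  have hg1 : Tendsto (fun R : ℝ => ((R : ℂ) - lam).re / ‖(R : ℂ) - lam‖)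
      atTop (𝓝 1) := by
    have hgc : ContinuousAt (fun z : ℂ => z.re / ‖z‖) 1 :=
      (Complex.continuous_re.continuousAt.div continuous_norm.continuousAt (by simp))
    have h := hgc.tendsto.comp hw
    have h' : Tendsto (fun R => (w R).re / ‖w R‖) atTop (𝓝 1) := by
      simpa [Function.comp_def] using h
    apply h'.congr'
    filter_upwards [hfact, eventually_gt_atTop (0 : ℝ)] with R ⟨e1, _⟩ hR
    rw [e1, Complex.re_ofReal_mul, norm_mul, Complex.norm_real, Real.norm_eq_abs, abs_of_pos hR,
      mul_div_mul_left _ _ hR.ne']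
  have hg2 : Tendsto (fun R : ℝ => (-(R : ℂ) - lam).re / ‖-(R : ℂ) - lam‖)
      atTop (𝓝 (-1)) := by
    have hgc : ContinuousAt (fun z : ℂ => z.re / ‖z‖) (-1) :=
      (Complex.continuous_re.continuousAt.div continuous_norm.continuousAt (by simp))
    have h := hgc.tendsto.comp hw'
    have h' : Tendsto (fun R => (w' R).re / ‖w' R‖) atTop (𝓝 (-1)) := by
      simpa [Function.comp_def] using h
    apply h'.congr'
    filter_upwards [hfact, eventually_gt_atTop (0 : ℝ)] with R ⟨_, e2⟩ hR
    rw [e2, Complex.re_ofReal_mul, norm_mul, Complex.norm_real, Real.norm_eq_abs, abs_of_pos hR,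
      mul_div_mul_left _ _ hR.ne']
  -- arg part
  have harg : Tendsto (fun R : ℝ => Complex.arg ((R : ℂ) - lam) - Complex.arg (-(R : ℂ) - lam))
      atTop (𝓝 (if 0 < lam.im then (Real.pi : ℝ) else -Real.pi)) := by
    have him1 : ∀ R : ℝ, ((R : ℂ) - lam).im = -lam.im := by intro R; simp
    have him2 : ∀ R : ℝ, (-(R : ℂ) - lam).im = -lam.im := by intro R; simp
    have ha1 := (Real.continuous_arccos.tendsto 1).comp hg1
    have ha2 := (Real.continuous_arccos.tendsto (-1)).comp hg2
    rw [Real.arccos_one] at ha1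
    rw [Real.arccos_neg_one] at ha2
    have ha1' : Tendsto (fun R : ℝ =>
        Real.arccos (((R : ℂ) - lam).re / ‖(R : ℂ) - lam‖)) atTop (𝓝 0) := by
      simpa [Function.comp_def] using ha1
    have ha2' : Tendsto (fun R : ℝ =>
        Real.arccos ((-(R : ℂ) - lam).re / ‖-(R : ℂ) - lam‖)) atTop (𝓝 Real.pi) := by
      simpa [Function.comp_def] using ha2
    rcases lt_or_gt_of_ne hlam with hneg | hpos
    · -- lam.im < 0 : both points have positive imaginary part
      rw [if_neg (not_lt.2 hneg.le)]
      have h := ha1'.sub ha2'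
      rw [zero_sub] at h
      apply h.congr
      intro R
      rw [Complex.arg_of_im_pos (by rw [him1]; linarith),
        Complex.arg_of_im_pos (by rw [him2]; linarith)]
    · rw [if_pos hpos]
      have h := ha2'.sub ha1'
      rw [sub_zero] at h
      apply h.congr
      intro R
      rw [Complex.arg_of_im_neg (by rw [him1]; linarith),
        Complex.arg_of_im_neg (by rw [him2]; linarith)]
      ring
  -- combine
  have hLC : Tendsto (fun R : ℝ =>
      ((Real.log (‖(R : ℂ) - lam‖) - Real.log (‖-(R : ℂ) - lam‖) : ℝ) : ℂ))
      atTop (𝓝 ((0 : ℝ) : ℂ)) := (Complex.continuous_ofReal.tendsto _).comp hL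
  have hAC : Tendsto (fun R : ℝ =>
      ((Complex.arg ((R : ℂ) - lam) - Complex.arg (-(R : ℂ) - lam) : ℝ) : ℂ))
      atTop (𝓝 (((if 0 < lam.im then (Real.pi : ℝ) else -Real.pi) : ℝ) : ℂ)) :=
    (Complex.continuous_ofReal.tendsto _).comp harg
  have hsum := hLC.add (hAC.mul_const Complex.I)
  have hfin : Tendsto (fun R : ℝ =>
      Complex.log ((R : ℂ) - lam) - Complex.log (-(R : ℂ) - lam)) atTop
      (𝓝 (((0 : ℝ) : ℂ) + ((if 0 < lam.im then (Real.pi : ℝ) else -Real.pi : ℝ) : ℂ) * Complex.I)) := by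
    apply hsum.congr
    intro R
    simp [Complex.log]
    push_cast
    ring
  convert hfin using 2
  split_ifs <;> push_cast <;> ring


end St19

/-- For the normalized generator
`f(x) = 1/(x−λ) − (Φ(λ)/D(λ))·ψ(x)/(x−λ)` of `ker(Ã* − λ)`, the limit `Γ₁ f` exists and
equals `sign(Im λ)·πi − Φ(λ)Ψ(λ)/D(λ)`; consequently, for admissible `B`, every solution
`u` of `Ã* u = λ u` satisfies `Γ₂ u = M_B(λ)(Γ₁ u − B Γ₂ u)` with
`M_B(λ) = [sign(Im λ)·πi − Φ(λ)Ψ(λ)/D(λ) − B]⁻¹`. -/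
theorem statement_19 (φ ψ : L2) (lam : ℂ) (hlam : lam.im ≠ 0)
    (Dl Phi Psi : ℂ)
    (hD : Dl = 1 + ∫ x : ℝ, ψ x * (starRingEnd ℂ) (φ x) / ((x : ℂ) - lam))
    (hPhi : Phi = ∫ t : ℝ, (starRingEnd ℂ) (φ t) / ((t : ℂ) - lam))
    (hPsi : Psi = ∫ t : ℝ, ψ t / ((t : ℂ) - lam))
    (hDne : Dl ≠ 0)
    (sgn : ℂ) (hsgn : sgn = if 0 < lam.im then 1 else -1) :
    Tendsto (fun R : ℝ => ∫ x in Set.Ioc (-R) R,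
        (((x : ℂ) - lam)⁻¹ - (Phi / Dl) * ψ x / ((x : ℂ) - lam)))
      atTop (nhds (sgn * (Real.pi : ℂ) * Complex.I - Phi * Psi / Dl))
    ∧ ∀ B : ℂ, sgn * (Real.pi : ℂ) * Complex.I - Phi * Psi / Dl - B ≠ 0 →
        ∀ (u : L2) (c : ℂ) (h : inDomAstar u c),
          AtildeStarOp φ ψ u c h = lam • u →
          ∃ Γ1u : ℂ,
            Tendsto (fun R : ℝ => ∫ x in Set.Ioc (-R) R, u x) atTop (nhds Γ1u) ∧
            c = (sgn * (Real.pi : ℂ) * Complex.I - Phi * Psi / Dl - B)⁻¹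
                  * (Γ1u - B * c) := by
  have hψmem : MemLp (fun x : ℝ => ψ x) 2 (volume : Measure ℝ) := Lp.memLp ψ
  have hinv2 := St19.memLp_inv hlam
  have hψinv : Integrable (fun x : ℝ => ψ x * ((x : ℂ) - lam)⁻¹) :=
    St19.integrable_L2_mul hψmem hinv2
  -- value of ∫ ψ * inv
  have hPsi' : (∫ x : ℝ, ψ x * ((x : ℂ) - lam)⁻¹) = Psi := by
    rw [hPsi]
    simp_rw [div_eq_mul_inv]
  -- tendsto of ∫_Ioc of inv
  have hIoc_inv : Tendsto (fun R : ℝ => ∫ x in Set.Ioc (-R) R, ((x : ℂ) - lam)⁻¹)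
      atTop (𝓝 (sgn * (Real.pi : ℂ) * Complex.I)) := by
    have h := St19.tendsto_log_diff hlam
    rw [hsgn]
    have h' : Tendsto (fun R : ℝ => ∫ x in Set.Ioc (-R) R, ((x : ℂ) - lam)⁻¹)
        atTop (𝓝 ((if 0 < lam.im then (1 : ℂ) else -1) * Real.pi * Complex.I)) := by
      apply h.congr'
      filter_upwards [eventually_ge_atTop (0 : ℝ)] with R hR
      rw [St19.integral_inv_Ioc hlam hR]
    exact h'
  have hIoc_ψ := St19.trunc_tendsto hψinv
  rw [hPsi'] at hIoc_ψ
  -- Part 1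
  have part1 : Tendsto (fun R : ℝ => ∫ x in Set.Ioc (-R) R,
        (((x : ℂ) - lam)⁻¹ - (Phi / Dl) * ψ x / ((x : ℂ) - lam)))
      atTop (𝓝 (sgn * (Real.pi : ℂ) * Complex.I - Phi * Psi / Dl)) := by
    have T := hIoc_inv.sub (hIoc_ψ.const_mul (Phi / Dl))
    have T' : Tendsto (fun R : ℝ => ∫ x in Set.Ioc (-R) R,
          (((x : ℂ) - lam)⁻¹ - (Phi / Dl) * ψ x / ((x : ℂ) - lam)))
        atTop (𝓝 (sgn * (Real.pi : ℂ) * Complex.I - Phi / Dl * Psi)) := by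
      apply T.congr'
      filter_upwards [eventually_ge_atTop (0 : ℝ)] with R hR
      have hint1 : IntegrableOn (fun x : ℝ => ((x : ℂ) - lam)⁻¹) (Set.Ioc (-R) R) :=
        (St19.cont_inv hlam).integrableOn_Ioc
      have hint2 : IntegrableOn (fun x : ℝ => (Phi / Dl) * (ψ x * ((x : ℂ) - lam)⁻¹))
          (Set.Ioc (-R) R) := (hψinv.integrableOn).const_mul _
      rw [show (fun x : ℝ => (((x : ℂ) - lam)⁻¹ - (Phi / Dl) * ψ x / ((x : ℂ) - lam)))
            = fun x : ℝ => (((x : ℂ) - lam)⁻¹ - (Phi / Dl) * (ψ x * ((x : ℂ) - lam)⁻¹)) from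
          funext fun x => by rw [div_eq_mul_inv, mul_assoc]]
      rw [integral_sub hint1 hint2, integral_const_mul]
    have : sgn * (Real.pi : ℂ) * Complex.I - Phi / Dl * Psi
        = sgn * (Real.pi : ℂ) * Complex.I - Phi * Psi / Dl := by ring
    rwa [this] at T'
  refine ⟨part1, ?_⟩
  -- Part 2
  intro B hB u c h hu
  set k : ℂ := ⟪φ, u⟫_ℂ with hk_def
  -- a.e. identity from the operator equation
  have hae : ∀ᵐ x : ℝ ∂(volume : Measure ℝ),
      ((x : ℂ) * u x - c) + k * ψ x = lam * u x := by
    have e1 : (fun x : ℝ => ((x : ℂ) * u x - c) + k * ψ x)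
        =ᵐ[volume] (AtildeStarOp φ ψ u c h : ℝ → ℂ) := by
      have a1 := Lp.coeFn_add (MemLp.toLp (fun x : ℝ => (x : ℂ) * u x - c) h) (k • ψ)
      have a2 := MemLp.coeFn_toLp h
      have a3 := Lp.coeFn_smul k ψ
      filter_upwards [a1, a2, a3] with x hx1 hx2 hx3
      show ((x : ℂ) * u x - c) + k * ψ x = (AtildeStarOp φ ψ u c h : ℝ → ℂ) x
      have hop : AtildeStarOp φ ψ u c h
          = MemLp.toLp (fun x : ℝ => (x : ℂ) * u x - c) h + k • ψ := rfl
      rw [hop, hx1]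
      simp only [Pi.add_apply]
      rw [hx2, hx3]
      simp [smul_eq_mul]
    have e2 : (AtildeStarOp φ ψ u c h : ℝ → ℂ) =ᵐ[volume] fun x => lam * u x := by
      rw [hu]
      filter_upwards [Lp.coeFn_smul lam u] with x hx
      rw [hx]
      simp [smul_eq_mul]
    filter_upwards [e1, e2] with x hx1 hx2
    rw [hx1, hx2]
  have huae : (fun x : ℝ => (u x : ℂ))
      =ᵐ[volume] fun x => (c - k * ψ x) * ((x : ℂ) - lam)⁻¹ := by
    filter_upwards [hae] with x hx
    have hne := St19.sub_ne_zero_of_im hlam x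
    rw [eq_mul_inv_iff_mul_eq₀ hne]
    linear_combination hx
  -- conj φ is in L²
  have hφc : MemLp (fun x : ℝ => (starRingEnd ℂ) (φ x)) 2 (volume : Measure ℝ) := by
    refine ⟨Complex.continuous_conj.comp_aestronglyMeasurable (Lp.memLp φ).1, ?_⟩
    have heq : eLpNorm (fun x : ℝ => (starRingEnd ℂ) (φ x)) 2 volume
        = eLpNorm (fun x : ℝ => φ x) 2 volume :=
      eLpNorm_congr_norm_ae (Eventually.of_forall fun x => by simp)
    rw [heq]
    exact (Lp.memLp φ).2
  have hφinv : Integrable (fun x : ℝ => (starRingEnd ℂ) (φ x) * ((x : ℂ) - lam)⁻¹) :=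
    St19.integrable_L2_mul hφc hinv2
  have hφψ : Integrable (fun x : ℝ => (starRingEnd ℂ) (φ x) * ψ x) :=
    St19.integrable_L2_mul hφc hψmem
  have hbd : ∃ C : ℝ, ∀ x : ℝ, ‖((x : ℂ) - lam)⁻¹‖ ≤ C := by
    refine ⟨|lam.im|⁻¹, fun x => ?_⟩
    rw [norm_inv]
    have h1 : |lam.im| ≤ ‖(x : ℂ) - lam‖ := by
      have := Complex.abs_im_le_norm ((x : ℂ) - lam)
      simpa using this
    exact inv_anti₀ (abs_pos.2 hlam) h1
  have hφψinv : Integrable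
      (fun x : ℝ => (starRingEnd ℂ) (φ x) * ψ x * ((x : ℂ) - lam)⁻¹) := by
    have := hφψ.bdd_mul (St19.cont_inv hlam).aestronglyMeasurable (Eventually.of_forall hbd.choose_spec)
    apply this.congr
    filter_upwards with x
    ring
  -- the equation for k
  have hk : k = ∫ x : ℝ, (starRingEnd ℂ) (φ x) * u x := by
    rw [hk_def, MeasureTheory.L2.inner_def]
    simp_rw [RCLike.inner_apply]
    exact integral_congr_ae (Eventually.of_forall fun x => mul_comm _ _)
  have hk2 : k = c * Phi - k * (Dl - 1) := by
    have e3 : (∫ x : ℝ, (starRingEnd ℂ) (φ x) * u x)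
        = ∫ x : ℝ, (c * ((starRingEnd ℂ) (φ x) * ((x : ℂ) - lam)⁻¹)
            - k * ((starRingEnd ℂ) (φ x) * ψ x * ((x : ℂ) - lam)⁻¹)) := by
      apply integral_congr_ae
      filter_upwards [huae] with x hx
      rw [hx]
      ring
    have e6 : (∫ x : ℝ, (c * ((starRingEnd ℂ) (φ x) * ((x : ℂ) - lam)⁻¹)
            - k * ((starRingEnd ℂ) (φ x) * ψ x * ((x : ℂ) - lam)⁻¹)))
        = c * (∫ x : ℝ, (starRingEnd ℂ) (φ x) * ((x : ℂ) - lam)⁻¹)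
          - k * ∫ x : ℝ, (starRingEnd ℂ) (φ x) * ψ x * ((x : ℂ) - lam)⁻¹ := by
      rw [integral_sub (hφinv.const_mul c) (hφψinv.const_mul k),
        integral_const_mul, integral_const_mul]
    have e4 : (∫ x : ℝ, (starRingEnd ℂ) (φ x) * ((x : ℂ) - lam)⁻¹) = Phi := by
      rw [hPhi]; simp_rw [div_eq_mul_inv]
    have e5 : (∫ x : ℝ, (starRingEnd ℂ) (φ x) * ψ x * ((x : ℂ) - lam)⁻¹) = Dl - 1 := by
      rw [hD]
      simp_rw [div_eq_mul_inv]
      rw [add_sub_cancel_left]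
      congr 1
      ext x
      ring
    calc k = ∫ x : ℝ, (starRingEnd ℂ) (φ x) * u x := hk
      _ = _ := e3
      _ = c * Phi - k * (Dl - 1) := by rw [e6, e4, e5]
  have hkval : k = c * Phi / Dl := by
    rw [eq_div_iff hDne]
    linear_combination hk2
  -- u is a.e. c times the normalized generator
  have hu_gen : (fun x : ℝ => (u x : ℂ)) =ᵐ[volume]
      fun x => c * (((x : ℂ) - lam)⁻¹ - (Phi / Dl) * ψ x / ((x : ℂ) - lam)) := by
    filter_upwards [huae] with x hx
    rw [hx, hkval]
    rw [div_eq_mul_inv, div_eq_mul_inv, div_eq_mul_inv]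
    ring
  -- truncated integrals of u
  have hint_u : ∀ R : ℝ, (∫ x in Set.Ioc (-R) R, u x)
      = c * ∫ x in Set.Ioc (-R) R,
          (((x : ℂ) - lam)⁻¹ - (Phi / Dl) * ψ x / ((x : ℂ) - lam)) := by
    intro R
    rw [setIntegral_congr_ae measurableSet_Ioc (hu_gen.mono fun x hx _ => hx),
      integral_const_mul]
  refine ⟨c * (sgn * (Real.pi : ℂ) * Complex.I - Phi * Psi / Dl), ?_, ?_⟩
  · have := part1.const_mul c
    apply this.congr
    intro R
    rw [hint_u R]
  · rw [eq_comm, inv_mul_eq_iff_eq_mul₀ hB]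
    ring
end
end
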